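/- Let P be a directed family of sequences p with p_i ≥ 1, and A(P) the Köthe algebra λ(P) with multiplication e_i e_j = e_{min(i,j)}. If there exists a strictly increasing sequence (n_k) of indices such that (p_{n_k})_k is bounded for every p ∈ P, then A(P) has a bounded approximate identity (namely a subnet of (e_{n_k})). -/
import Mathlib


/-- The Köthe sequence space `λ(P)` as a subspace of `ℕ → ℂ`. -/
noncomputable def kothe (P : Set (ℕ → ℝ)) (hP : ∀ p ∈ P, ∀ i, (1 : ℝ) ≤ p i) :
    Submodule ℂ (ℕ → ℂ) where
  carrier := {a | ∀ p ∈ P, Summable fun i => ‖a i‖ * p i}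
  zero_mem' := by intro p hp; simpa using summable_zero
  add_mem' := by
    intro a b ha hb p hp
    refine Summable.of_nonneg_of_le
      (fun i => mul_nonneg (norm_nonneg _)
        (le_trans zero_le_one (hP p hp i))) (fun i => ?_) ((ha p hp).add (hb p hp))
    have := mul_le_mul_of_nonneg_right (norm_add_le ((a : ℕ → ℂ) i) (b i))
      (le_trans zero_le_one (hP p hp i))
    simpa [add_mul] using this
  smul_mem' := by
    intro c a ha p hp
    have := (ha p hp).mul_left ‖c‖
    refine this.congr fun i => ?_
    simp [norm_smul, mul_assoc]

/-- The `i`-th standard unit vector as an element of `λ(P)`. -/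
noncomputable def kotheE (P : Set (ℕ → ℝ)) (hP : ∀ p ∈ P, ∀ i, (1 : ℝ) ≤ p i)
    (i : ℕ) : kothe P hP :=
  ⟨Pi.single i 1, by
    intro p hp
    refine summable_of_ne_finset_zero (s := {i}) fun j hj => ?_
    rw [Pi.single_eq_of_ne (by simpa using hj)]
    simp⟩

/-- The seminorm `‖a‖_p = ∑ᵢ |aᵢ| pᵢ` (as a real-valued expression). -/
noncomputable def kNorm (p : ℕ → ℝ) (a : ℕ → ℂ) : ℝ := ∑' i, ‖a i‖ * p i

open Filter

/-- The summability of the defining series for elements of `kothe`. -/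
lemma kothe_summable {P : Set (ℕ → ℝ)} {hP : ∀ p ∈ P, ∀ i, (1 : ℝ) ≤ p i}
    (x : kothe P hP) {p : ℕ → ℝ} (hp : p ∈ P) :
    Summable fun i => ‖(x : ℕ → ℂ) i‖ * p i := x.2 p hp

lemma kNorm_nonneg {p : ℕ → ℝ} (hp1 : ∀ i, (1 : ℝ) ≤ p i) (a : ℕ → ℂ) :
    0 ≤ kNorm p a :=
  tsum_nonneg fun i => mul_nonneg (norm_nonneg _) (le_trans zero_le_one (hp1 i))

lemma kNorm_e (P : Set (ℕ → ℝ)) (hP : ∀ p ∈ P, ∀ i, (1 : ℝ) ≤ p i)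
    (p : ℕ → ℝ) (i : ℕ) : kNorm p ((kotheE P hP i : kothe P hP) : ℕ → ℂ) = p i := by
  have : kNorm p ((kotheE P hP i : kothe P hP) : ℕ → ℂ)
      = ∑' j, ‖(Pi.single i 1 : ℕ → ℂ) j‖ * p j := rfl
  rw [this, tsum_eq_single i]
  · simp
  · intro j hj
    rw [Pi.single_eq_of_ne hj]
    simp

/-- Triangle inequality for `kNorm` on differences of elements of `kothe`. -/
lemma kNorm_sub_le {P : Set (ℕ → ℝ)} {hP : ∀ p ∈ P, ∀ i, (1 : ℝ) ≤ p i}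
    {p : ℕ → ℝ} (hp : p ∈ P) (x y : kothe P hP) :
    kNorm p ((x - y : kothe P hP) : ℕ → ℂ)
      ≤ kNorm p (x : ℕ → ℂ) + kNorm p (y : ℕ → ℂ) := by
  have hxy : Summable fun i => ‖((x - y : kothe P hP) : ℕ → ℂ) i‖ * p i :=
    kothe_summable _ hp
  have hsum : Summable fun i =>
      ‖(x : ℕ → ℂ) i‖ * p i + ‖(y : ℕ → ℂ) i‖ * p i :=
    (kothe_summable x hp).add (kothe_summable y hp)
  have hle : ∀ i, ‖((x - y : kothe P hP) : ℕ → ℂ) i‖ * p i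
      ≤ ‖(x : ℕ → ℂ) i‖ * p i + ‖(y : ℕ → ℂ) i‖ * p i := by
    intro i
    have h1 : ((x - y : kothe P hP) : ℕ → ℂ) i = (x : ℕ → ℂ) i - (y : ℕ → ℂ) i := rfl
    rw [h1, ← add_mul]
    exact mul_le_mul_of_nonneg_right (norm_sub_le _ _)
      (le_trans zero_le_one (hP p hp i))
  calc kNorm p ((x - y : kothe P hP) : ℕ → ℂ)
      ≤ ∑' i, (‖(x : ℕ → ℂ) i‖ * p i + ‖(y : ℕ → ℂ) i‖ * p i) :=
        Summable.tsum_le_tsum hle hxy hsum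
    _ = kNorm p (x : ℕ → ℂ) + kNorm p (y : ℕ → ℂ) :=
        Summable.tsum_add (kothe_summable x hp) (kothe_summable y hp)

/-- If there is a strictly increasing sequence `(n_k)` with `(p_{n_k})_k` bounded for
every `p ∈ P`, then the Köthe algebra `A(P)` has a bounded approximate identity. -/
theorem stmt13 (P : Set (ℕ → ℝ)) (hP : ∀ p ∈ P, ∀ i, (1 : ℝ) ≤ p i)
    (hdir : ∀ p ∈ P, ∀ q ∈ P, ∃ r ∈ P, ∀ i, max (p i) (q i) ≤ r i)
    (M : kothe P hP →ₗ[ℂ] kothe P hP →ₗ[ℂ] kothe P hP)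
    (hMe : ∀ i j : ℕ, M (kotheE P hP i) (kotheE P hP j) = kotheE P hP (min i j))
    (hMsub : ∀ p ∈ P, ∀ a b : kothe P hP,
      kNorm p (M a b : ℕ → ℂ) ≤ kNorm p (a : ℕ → ℂ) * kNorm p (b : ℕ → ℂ))
    (s : ℕ → ℕ) (hs : StrictMono s)
    (hbdd : ∀ p ∈ P, ∃ C : ℝ, ∀ k, p (s k) ≤ C) :
    ∃ (ι : Type) (pr : Preorder ι),
      (∀ x y : ι, ∃ z, pr.le x z ∧ pr.le y z) ∧ Nonempty ι ∧
      ∃ u : ι → kothe P hP,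
        (∀ p ∈ P, ∃ C : ℝ, ∀ i, kNorm p (u i : ℕ → ℂ) ≤ C) ∧
        ∀ a : kothe P hP, ∀ p ∈ P,
          Tendsto (fun i => kNorm p ((a - M a (u i) : kothe P hP) : ℕ → ℂ))
            (@Filter.atTop ι pr) (nhds 0) := by
  classical
  refine ⟨ℕ, inferInstance, fun x y => ⟨max x y, le_max_left _ _, le_max_right _ _⟩,
    ⟨0⟩, fun k => kotheE P hP (s k), ?_, ?_⟩
  · intro p hp
    obtain ⟨C, hC⟩ := hbdd p hp
    exact ⟨C, fun k => by rw [kNorm_e]; exact hC k⟩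
  · intro a p hp
    obtain ⟨C, hC⟩ := hbdd p hp
    have hC0 : 0 ≤ C := le_trans (le_trans zero_le_one (hP p hp (s 0))) (hC 0)
    set g : ℕ → ℝ := fun i => ‖(a : ℕ → ℂ) i‖ * p i with hg
    have hgsum : Summable g := kothe_summable a hp
    have hg0 : ∀ i, 0 ≤ g i := fun i =>
      mul_nonneg (norm_nonneg _) (le_trans zero_le_one (hP p hp i))
    -- partial sums
    set A : ℕ → kothe P hP := fun m =>
      ∑ i ∈ Finset.range m, (a : ℕ → ℂ) i • kotheE P hP i with hA
    -- tail
    set T : ℕ → ℝ := fun m => ∑' k, g (k + m) with hT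
    have hTto : Tendsto T atTop (nhds 0) := tendsto_sum_nat_add g
    have hT0 : ∀ m, 0 ≤ T m := fun m => tsum_nonneg fun k => hg0 _
    -- coordinates of a - A m
    have hcoord : ∀ m j, ((a - A m : kothe P hP) : ℕ → ℂ) j
        = if j < m then 0 else (a : ℕ → ℂ) j := by
      intro m j
      have h1 : ((A m : kothe P hP) : ℕ → ℂ) j
          = ∑ i ∈ Finset.range m, (a : ℕ → ℂ) i • (Pi.single i (1:ℂ) : ℕ → ℂ) j := by
        simp [hA, kotheE]
      have h2 : ((a - A m : kothe P hP) : ℕ → ℂ) j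
          = (a : ℕ → ℂ) j - ((A m : kothe P hP) : ℕ → ℂ) j := rfl
      rw [h2, h1]
      by_cases hj : j < m
      · rw [Finset.sum_eq_single j]
        · simp [hj]
        · intro i _ hij
          rw [Pi.single_eq_of_ne (Ne.symm hij)]; simp
        · intro hjm; exact absurd (Finset.mem_range.mpr hj) hjm
      · rw [Finset.sum_eq_zero, if_neg hj, sub_zero]
        intro i hi
        have : j ≠ i := by
          intro h; subst h; exact hj (Finset.mem_range.mp hi)
        rw [Pi.single_eq_of_ne this]; simp
    -- kNorm of a - A m is the tail T m
    have hkA : ∀ m, kNorm p ((a - A m : kothe P hP) : ℕ → ℂ) = T m := by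
      intro m
      have h1 : kNorm p ((a - A m : kothe P hP) : ℕ → ℂ)
          = ∑' j, (if j < m then 0 else g j) := by
        unfold kNorm
        congr 1; funext j
        rw [hcoord m j]
        by_cases hj : j < m <;> simp [hj, hg]
      rw [h1, hT]
      refine (Function.Injective.tsum_eq (g := fun k : ℕ => k + m)
        (add_left_injective m) ?_).symm.trans ?_
      · intro j hj
        rcases lt_or_ge j m with h | h
        · exact absurd (by simp [h] : (if j < m then (0:ℝ) else g j) = 0) hj
        · exact ⟨j - m, show j - m + m = j by omega⟩
      · congr 1; funext k
        simp [Nat.not_lt.mpr (Nat.le_add_left m k)]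
    -- M (A m) (e_{s k}) = A m when m ≤ s k
    have hMA : ∀ m k, m ≤ s k → M (A m) (kotheE P hP (s k)) = A m := by
      intro m k hmk
      rw [hA]
      rw [map_sum]
      rw [LinearMap.coe_sum, Finset.sum_apply]
      refine Finset.sum_congr rfl fun i hi => ?_
      have hi' : i < m := Finset.mem_range.mp hi
      rw [map_smul, LinearMap.smul_apply, hMe,
        min_eq_left (le_of_lt (lt_of_lt_of_le hi' hmk))]
    -- key estimate
    have hest : ∀ m k, m ≤ s k →
        kNorm p ((a - M a (kotheE P hP (s k)) : kothe P hP) : ℕ → ℂ)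
          ≤ T m * (1 + C) := by
      intro m k hmk
      have hrw : (a - M a (kotheE P hP (s k)) : kothe P hP)
          = (a - A m) - M (a - A m) (kotheE P hP (s k)) := by
        rw [map_sub, LinearMap.sub_apply, hMA m k hmk]
        abel
      rw [hrw]
      have h1 := kNorm_sub_le hp (a - A m) (M (a - A m) (kotheE P hP (s k)))
      have h2 := hMsub p hp (a - A m) (kotheE P hP (s k))
      rw [kNorm_e] at h2
      have h3 : kNorm p ((a - A m : kothe P hP) : ℕ → ℂ) * p (s k) ≤ T m * C := by
        rw [hkA]
        exact mul_le_mul_of_nonneg_left (hC k) (hT0 m)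
      calc kNorm p (((a - A m) - M (a - A m) (kotheE P hP (s k)) : kothe P hP) : ℕ → ℂ)
          ≤ kNorm p ((a - A m : kothe P hP) : ℕ → ℂ)
            + kNorm p ((M (a - A m) (kotheE P hP (s k)) : kothe P hP) : ℕ → ℂ) := h1
        _ ≤ T m + T m * C := by
            rw [← hkA m]
            exact add_le_add le_rfl (le_trans h2 (by rw [hkA]; exact (hkA m ▸ h3)))
        _ = T m * (1 + C) := by ring
    -- conclude by squeeze
    rw [Metric.tendsto_atTop]
    intro ε hε
    have hto : Tendsto (fun m => T m * (1 + C)) atTop (nhds 0) := by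
      have := hTto.mul_const (1 + C)
      simpa using this
    rw [Metric.tendsto_atTop] at hto
    obtain ⟨N, hN⟩ := hto ε hε
    refine ⟨N, fun k hk => ?_⟩
    have hNsk : N ≤ s k := le_trans hk (hs.le_apply)
    have h1 := hest N k hNsk
    have h2 := hN N le_rfl
    rw [Real.dist_eq, sub_zero,
      abs_of_nonneg (mul_nonneg (hT0 N) (by linarith : (0:ℝ) ≤ 1 + C))] at h2
    have hnn : 0 ≤ kNorm p ((a - M a (kotheE P hP (s k)) : kothe P hP) : ℕ → ℂ) :=
      kNorm_nonneg (hP p hp) _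
    show dist (kNorm p ((a - M a (kotheE P hP (s k)) : kothe P hP) : ℕ → ℂ)) 0 < ε
    rw [Real.dist_eq, sub_zero, abs_of_nonneg hnn]
    exact lt_of_le_of_lt h1 h2
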